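/- Let p be an odd prime, let q_1 be a squarefree positive integer with p | q_1, let j ∈ {1, −1, 2, −2}, and let ψ = ψ_j. Then for every complex number w, all terms with l = 1 and with l ≥ 3 in the following series vanish and Σ_{l = 0}^∞ ψ(p^l)·G(χ_{p^l}, q_1)·p^{−lw} = 1 − ψ(p)²·p^{1 − 2w}. -/

import Mathlib

open Complex

/-- The Gauss sum `τ(χ, q) = ∑_{j=0}^{n-1} χ(j) e(jq/n)` of a function `χ` regarded as a
character modulo `n`, at the integer `q`, where `e(z) = exp(2πiz)`. -/
noncomputable def tauChar (n : ℕ) (χ : ℕ → ℂ) (q : ℤ) : ℂ :=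
  ∑ j ∈ Finset.range n, χ j * Complex.exp (2 * Real.pi * Complex.I * j * q / n)

/-- The quadratic character `χ_n = (·/n)` given by the Jacobi symbol, for odd positive `n`. -/
noncomputable def chiJacobi (n : ℕ) : ℕ → ℂ := fun m => (jacobiSym m n : ℂ)

/-- The normalized Gauss sum
`G(χ_n, q) = ((1−i)/2 + (−1/n)·(1+i)/2)·τ(χ_n, q)` for odd positive `n`. -/
noncomputable def GJacobi (n : ℕ) (q : ℤ) : ℂ :=
  ((1 - Complex.I) / 2 + (jacobiSym (-1) n : ℂ) * (1 + Complex.I) / 2) * tauChar n (chiJacobi n) q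

/-- For `j ∈ {±1, ±2}`, the character `ψ_j`: zero on even integers, Jacobi symbol `(j/k)` on
odd `k`. -/
noncomputable def psiJ (j : ℤ) : ℕ → ℂ := fun k => if Odd k then (jacobiSym j k : ℂ) else 0

/-- split a sum over `range (a*b)` -/
lemma sum_range_mul_split {M : Type*} [AddCommMonoid M] (f : ℕ → M) (a b : ℕ) :
    ∑ j ∈ Finset.range (a * b), f j
      = ∑ y ∈ Finset.range b, ∑ x ∈ Finset.range a, f (a * y + x) := by
  induction b with
  | zero => simp
  | succ b ih =>
      rw [Nat.mul_succ, Finset.sum_range_add, ih, Finset.sum_range_succ]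

lemma geom_zero {ζ : ℂ} (h1 : ζ ≠ 1) {n : ℕ} (hn : ζ ^ n = 1) :
    ∑ j ∈ Finset.range n, ζ ^ j = 0 := by
  rw [geom_sum_eq h1, hn, sub_self, zero_div]

lemma exp_ratio_eq_one_iff {n q : ℕ} (hn : n ≠ 0) :
    Complex.exp (2 * Real.pi * Complex.I * q / n) = 1 ↔ n ∣ q := by
  have hn' : (n : ℂ) ≠ 0 := Nat.cast_ne_zero.mpr hn
  constructor
  · intro h
    rw [Complex.exp_eq_one_iff] at h
    obtain ⟨k, hk⟩ := h
    have h2 : (q : ℂ) = k * n := by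
      field_simp at hk
      have hq : (q : ℂ) * (2 * Real.pi * Complex.I) = k * n * (2 * Real.pi * Complex.I) := by
        linear_combination (2 * Real.pi * Complex.I) * hk
      exact mul_right_cancel₀ Complex.two_pi_I_ne_zero hq
    have h3 : (q : ℤ) = k * n := by exact_mod_cast h2
    exact Int.ofNat_dvd.mp ⟨k, by exact_mod_cast h3.trans (mul_comm k n)⟩
  · rintro ⟨t, rfl⟩
    have : 2 * Real.pi * Complex.I * (↑(n * t)) / n = (t : ℤ) * (2 * Real.pi * Complex.I) := by
      push_cast; field_simp
    rw [this, Complex.exp_int_mul_two_pi_mul_I]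

lemma exp_pow_form (n q jj : ℕ) :
    Complex.exp (2 * Real.pi * Complex.I * jj * (q : ℤ) / n)
      = (Complex.exp (2 * Real.pi * Complex.I * q / n)) ^ jj := by
  rw [← Complex.exp_nat_mul]
  push_cast
  ring_nf

lemma sum_jacobi_zero {p : ℕ} (hp : p.Prime) (hpodd : Odd p) :
    ∑ x ∈ Finset.range p, (jacobiSym (x : ℤ) p) = 0 := by
  haveI : Fact p.Prime := ⟨hp⟩
  have h2 : ringChar (ZMod p) ≠ 2 := by
    rw [ZMod.ringChar_zmod_n]
    rintro rfl
    exact (Nat.not_odd_iff_even.mpr (even_two)) hpodd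
  have key := quadraticChar_sum_zero h2
  calc ∑ x ∈ Finset.range p, (jacobiSym (x : ℤ) p)
      = ∑ a : ZMod p, quadraticChar (ZMod p) a := by
        refine Finset.sum_nbij' (fun x => (x : ZMod p)) (fun a => a.val) ?_ ?_ ?_ ?_ ?_
        · intro a _; exact Finset.mem_univ _
        · intro a _; exact Finset.mem_range.mpr (ZMod.val_lt a)
        · intro a ha; exact ZMod.val_cast_of_lt (Finset.mem_range.mp ha)
        · intro a _; exact ZMod.natCast_rightInverse a
        · intro a _
          rw [← jacobiSym.legendreSym.to_jacobiSym p (a : ℤ)]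
          simp only [legendreSym]
          norm_cast
    _ = 0 := key

section
variable {p q₁ : ℕ}

lemma not_pow_dvd (hp : p.Prime) (hsf : Squarefree q₁) {l : ℕ} (hl : 2 ≤ l) :
    ¬ (p ^ l ∣ q₁) := by
  intro h
  have h2 : p * p ∣ q₁ := dvd_trans (by rw [← sq]; exact pow_dvd_pow p hl) h
  exact hp.not_isUnit (hsf p h2)

lemma tau_one (hp : p.Prime) (hpodd : Odd p) (hpq : p ∣ q₁) :
    tauChar p (chiJacobi p) q₁ = 0 := by
  have hp0 : p ≠ 0 := hp.pos.ne'
  unfold tauChar chiJacobi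
  have he : ∀ jj : ℕ, Complex.exp (2 * Real.pi * Complex.I * jj * ((q₁ : ℕ) : ℤ) / p) = 1 := by
    intro jj
    rw [exp_pow_form, (exp_ratio_eq_one_iff hp0).mpr hpq, one_pow]
  simp only [he, mul_one]
  exact_mod_cast congrArg (Int.cast : ℤ → ℂ) (sum_jacobi_zero hp hpodd)

lemma tau_two (hp : p.Prime) (hpodd : Odd p) (hsf : Squarefree q₁) (hpq : p ∣ q₁) :
    tauChar (p ^ 2) (chiJacobi (p ^ 2)) q₁ = -(p : ℂ) := by
  have hp0 : p ≠ 0 := hp.pos.ne'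
  have hp1 : 1 < p := hp.one_lt
  set ζ := Complex.exp (2 * Real.pi * Complex.I * q₁ / ((p ^ 2 : ℕ) : ℂ)) with hζdef
  have hζ1 : ζ ≠ 1 := fun h =>
    not_pow_dvd hp hsf (le_refl 2) ((exp_ratio_eq_one_iff (pow_ne_zero 2 hp0)).mp h)
  have hζp : ζ ^ p = 1 := by
    rw [hζdef, ← Complex.exp_nat_mul]
    have hc : (p : ℂ) ≠ 0 := Nat.cast_ne_zero.mpr hp0
    have harg : (p : ℂ) * (2 * Real.pi * Complex.I * q₁ / ((p ^ 2 : ℕ) : ℂ))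
        = 2 * Real.pi * Complex.I * q₁ / p := by
      push_cast
      field_simp
    rw [harg, (exp_ratio_eq_one_iff hp0).mpr hpq]
  unfold tauChar chiJacobi
  have hform : ∀ jj : ℕ, Complex.exp (2 * Real.pi * Complex.I * jj * ((q₁ : ℕ) : ℤ) / ((p ^ 2 : ℕ) : ℂ))
      = ζ ^ jj := fun jj => exp_pow_form (p ^ 2) q₁ jj
  simp only [hform]
  have hjac : ∀ jj : ℕ, (jacobiSym (jj : ℤ) (p ^ 2) : ℂ) = ((jacobiSym (jj : ℤ) p : ℂ)) ^ 2 := by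
    intro jj
    rw [jacobiSym.pow_right]
    push_cast
    ring
  simp only [hjac]
  have hsplit := sum_range_mul_split (fun jj => ((jacobiSym (jj : ℤ) p : ℂ)) ^ 2 * ζ ^ jj) p p
  rw [sq, hsplit]
  have hS : ∑ x ∈ Finset.range p, ((jacobiSym (x : ℤ) p : ℂ)) ^ 2 * ζ ^ x = -1 := by
    have hterm : ∀ x ∈ Finset.range p,
        ((jacobiSym (x : ℤ) p : ℂ)) ^ 2 * ζ ^ x = ζ ^ x - (if x = 0 then 1 else 0) := by
      intro x hx
      rcases eq_or_ne x 0 with rfl | hx0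
      · simp [jacobiSym.zero_left hp1]
      · have hnd : ¬ p ∣ x :=
          Nat.not_dvd_of_pos_of_lt (Nat.pos_of_ne_zero hx0) (Finset.mem_range.mp hx)
        have hco : Int.gcd (x : ℤ) p = 1 := by
          have : Nat.Coprime x p := (Nat.coprime_comm.mp (hp.coprime_iff_not_dvd.mpr hnd))
          simpa [Int.gcd] using this
        have := jacobiSym.sq_one hco
        have h2 : ((jacobiSym (x : ℤ) p : ℂ)) ^ 2 = 1 := by exact_mod_cast congrArg (Int.cast : ℤ → ℂ) this
        rw [h2, if_neg hx0]
        ring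
    rw [Finset.sum_congr rfl hterm, Finset.sum_sub_distrib, geom_zero hζ1 hζp]
    simp [hp.pos]
  have hinner : ∀ y ∈ Finset.range p,
      (∑ x ∈ Finset.range p, ((jacobiSym ((p * y + x : ℕ) : ℤ) p : ℂ)) ^ 2 * ζ ^ (p * y + x)) = -1 := by
    intro y _
    rw [← hS]
    refine Finset.sum_congr rfl fun x _ => ?_
    have hmod : jacobiSym ((p * y + x : ℕ) : ℤ) p = jacobiSym (x : ℤ) p := by
      apply jacobiSym.mod_left'
      push_cast
      rw [add_comm, Int.add_mul_emod_self_left]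
    have hpow : ζ ^ (p * y + x) = ζ ^ x := by
      rw [pow_add, pow_mul, hζp, one_pow, one_mul]
    rw [hmod, hpow]
  rw [Finset.sum_congr rfl hinner]
  simp [Finset.sum_const]

lemma tau_ge_three (hp : p.Prime) (hsf : Squarefree q₁) (hpq : p ∣ q₁)
    {l : ℕ} (hl : 3 ≤ l) : tauChar (p ^ l) (chiJacobi (p ^ l)) q₁ = 0 := by
  have hp0 : p ≠ 0 := hp.pos.ne'
  set ζ := Complex.exp (2 * Real.pi * Complex.I * q₁ / ((p ^ l : ℕ) : ℂ)) with hζdef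
  set ω := Complex.exp (2 * Real.pi * Complex.I * q₁ / ((p ^ (l - 1) : ℕ) : ℂ)) with hωdef
  have hpl0 : ((p ^ (l - 1) : ℕ) : ℂ) ≠ 0 := Nat.cast_ne_zero.mpr (pow_ne_zero _ hp0)
  have hω1 : ω ≠ 1 := fun h =>
    not_pow_dvd hp hsf (by omega : 2 ≤ l - 1)
      ((exp_ratio_eq_one_iff (pow_ne_zero _ hp0)).mp h)
  have hωN : ω ^ (p ^ (l - 1)) = 1 := by
    rw [hωdef, ← Complex.exp_nat_mul]
    have harg : ((p ^ (l - 1) : ℕ) : ℂ) * (2 * Real.pi * Complex.I * q₁ / ((p ^ (l - 1) : ℕ) : ℂ))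
        = ((q₁ : ℤ) : ℂ) * (2 * Real.pi * Complex.I) := by
      push_cast
      rw [mul_comm, div_mul_cancel₀ _ (pow_ne_zero _ (Nat.cast_ne_zero.mpr hp0 : (p:ℂ) ≠ 0))]
      ring
    rw [harg, Complex.exp_int_mul_two_pi_mul_I]
  have hζpω : ζ ^ p = ω := by
    rw [hζdef, hωdef, ← Complex.exp_nat_mul]
    congr 1
    field_simp [Nat.cast_ne_zero.mpr hp0]
    rw [show (p ^ l : ℕ) = p ^ (l - 1) * p from by rw [← pow_succ]; congr 1; omega]; push_cast
    ring
  unfold tauChar chiJacobi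
  have hform : ∀ jj : ℕ, Complex.exp (2 * Real.pi * Complex.I * jj * ((q₁ : ℕ) : ℤ) / ((p ^ l : ℕ) : ℂ))
      = ζ ^ jj := fun jj => exp_pow_form (p ^ l) q₁ jj
  simp only [hform]
  have hpl : p ^ l = p * p ^ (l - 1) := by
    rw [← pow_succ']
    congr 1
    omega
  rw [hpl, sum_range_mul_split (fun jj => (jacobiSym (jj : ℤ) (p * p ^ (l - 1)) : ℂ) * ζ ^ jj)]
  have hinner : ∀ y ∈ Finset.range (p ^ (l - 1)),
      (∑ x ∈ Finset.range p, (jacobiSym ((p * y + x : ℕ) : ℤ) (p * p ^ (l - 1)) : ℂ) * ζ ^ (p * y + x))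
        = ω ^ y * ∑ x ∈ Finset.range p, (jacobiSym ((x : ℕ) : ℤ) (p * p ^ (l - 1)) : ℂ) * ζ ^ x := by
    intro y _
    rw [Finset.mul_sum]
    refine Finset.sum_congr rfl fun x _ => ?_
    have hmod : jacobiSym ((p * y + x : ℕ) : ℤ) (p * p ^ (l - 1))
        = jacobiSym ((x : ℕ) : ℤ) (p * p ^ (l - 1)) := by
      rw [← hpl]
      have h1 : jacobiSym ((p * y + x : ℕ) : ℤ) (p ^ l) = (jacobiSym ((p * y + x : ℕ) : ℤ) p) ^ l :=
        jacobiSym.pow_right _ p l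
      have h2 : jacobiSym ((x : ℕ) : ℤ) (p ^ l) = (jacobiSym ((x : ℕ) : ℤ) p) ^ l :=
        jacobiSym.pow_right _ p l
      rw [h1, h2]
      congr 1
      apply jacobiSym.mod_left'
      push_cast
      rw [add_comm, Int.add_mul_emod_self_left]
    have hpow : ζ ^ (p * y + x) = ω ^ y * ζ ^ x := by
      rw [pow_add, pow_mul, hζpω]
    rw [hmod, hpow]
    ring
  rw [Finset.sum_congr rfl hinner, ← Finset.sum_mul, geom_zero hω1 hωN, zero_mul]

end

theorem local_factor_at_p_dividing (p : ℕ) (hp : p.Prime) (hpodd : Odd p)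
    (q₁ : ℕ) (hq₁ : 0 < q₁) (hsf : Squarefree q₁) (hpq : p ∣ q₁)
    (j : ℤ) (hj : j = 1 ∨ j = -1 ∨ j = 2 ∨ j = -2) (w : ℂ) :
    (psiJ j (p ^ 1) * GJacobi (p ^ 1) q₁ / ((p : ℂ) ^ ((1 : ℂ) * w)) = 0) ∧
    (∀ l : ℕ, 3 ≤ l → psiJ j (p ^ l) * GJacobi (p ^ l) q₁ / ((p : ℂ) ^ ((l : ℂ) * w)) = 0) ∧
    (∑' l : ℕ, psiJ j (p ^ l) * GJacobi (p ^ l) q₁ / ((p : ℂ) ^ ((l : ℂ) * w))) =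
      1 - (psiJ j p) ^ 2 * (p : ℂ) ^ (1 - 2 * w) := by
  have hp0 : (p : ℂ) ≠ 0 := Nat.cast_ne_zero.mpr hp.pos.ne'
  have h1 : psiJ j (p ^ 1) * GJacobi (p ^ 1) q₁ / ((p : ℂ) ^ ((1 : ℂ) * w)) = 0 := by
    rw [pow_one, GJacobi, tau_one hp hpodd hpq, mul_zero, mul_zero, zero_div]
  have h3 : ∀ l : ℕ, 3 ≤ l →
      psiJ j (p ^ l) * GJacobi (p ^ l) q₁ / ((p : ℂ) ^ ((l : ℂ) * w)) = 0 := by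
    intro l hl
    rw [GJacobi, tau_ge_three hp hsf hpq hl, mul_zero, mul_zero, zero_div]
  refine ⟨h1, h3, ?_⟩
  set f : ℕ → ℂ := fun l => psiJ j (p ^ l) * GJacobi (p ^ l) q₁ / ((p : ℂ) ^ ((l : ℂ) * w))
    with hfdef
  have hzero : ∀ l ∉ ({0, 2} : Finset ℕ), f l = 0 := by
    intro l hl
    simp only [Finset.mem_insert, Finset.mem_singleton] at hl
    push_neg at hl
    rcases l with _ | _ | _ | n
    · simp at hl
    · have : ((0:ℕ) + 1 : ℕ) = 1 := rfl
      rw [hfdef]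
      simp only [this, Nat.cast_one]
      exact h1
    · simp at hl
    · exact h3 (n + 3) (by omega)
  rw [tsum_eq_sum hzero, Finset.sum_pair (by norm_num : (0 : ℕ) ≠ 2)]
  have hf0 : f 0 = 1 := by
    have htau : tauChar 1 (chiJacobi 1) q₁ = 1 := by
      simp [tauChar, chiJacobi]
    have hG : GJacobi 1 q₁ = 1 := by
      rw [GJacobi, htau, mul_one]
      simp
      ring
    rw [hfdef]
    simp only [pow_zero, hG, Nat.cast_zero, zero_mul, Complex.cpow_zero]
    simp [psiJ]
  have hGp2 : GJacobi (p ^ 2) q₁ = -(p : ℂ) := by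
    have hpre : (jacobiSym (-1) (p ^ 2) : ℤ) = 1 := by
      rw [jacobiSym.pow_right]
      exact jacobiSym.sq_one (by simp [Int.gcd])
    rw [GJacobi, tau_two hp hpodd hsf hpq, hpre]
    push_cast
    ring
  have hpsi2 : psiJ j (p ^ 2) = (psiJ j p) ^ 2 := by
    simp only [psiJ, if_pos (hpodd.pow : Odd (p ^ 2)), if_pos hpodd]
    rw [jacobiSym.pow_right]
    push_cast
    ring
  have hf2 : f 2 = -((psiJ j p) ^ 2 * (p : ℂ) ^ (1 - 2 * w)) := by
    rw [hfdef]
    simp only [hGp2, hpsi2]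
    rw [Complex.cpow_sub _ _ hp0, Complex.cpow_one]
    push_cast
    ring
  rw [hf0, hf2]
  ring
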